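/- Local complementations at two non-adjacent vertices commute: if u is not adjacent to v in G, then (G ⋆ u) ⋆ v = (G ⋆ v) ⋆ u. -/

import Mathlib

open scoped Classical

/-- Local complementation of `G` at a vertex `u`: toggle all edges between
distinct neighbors of `u`. -/
def localComp {V : Type*} (G : SimpleGraph V) (u : V) : SimpleGraph V where
  Adj x y := Xor' (G.Adj x y) (x ≠ y ∧ G.Adj u x ∧ G.Adj u y)
  symm := ⟨by
    intro x y h
    have h1 := G.adj_comm x y
    have h2 : (y ≠ x) ↔ (x ≠ y) := ne_comm
    simp only [Xor', Xor] at h ⊢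
    tauto⟩
  loopless := ⟨by
    intro x h
    rcases h with ⟨h1, -⟩ | ⟨⟨h1, -, -⟩, -⟩
    · exact G.loopless.irrefl x h1
    · exact h1 rfl⟩

lemma xor_aux (A Pu Pv : Prop) : Xor' (Xor' A Pu) Pv ↔ Xor' (Xor' A Pv) Pu := by
  unfold Xor' Xor; tauto

/-- Local complementations at two non-adjacent vertices commute. -/
theorem stmt_15 {V : Type*} (G : SimpleGraph V) (u v : V) (h : ¬ G.Adj u v) :
    localComp (localComp G u) v = localComp (localComp G v) u := by
  have h' : ¬ G.Adj v u := fun hv => h hv.symm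
  have e : ∀ w, (localComp G u).Adj v w ↔ G.Adj v w := by
    intro w; simp [localComp, Xor', Xor, h]
  have e2 : ∀ w, (localComp G v).Adj u w ↔ G.Adj u w := by
    intro w; simp [localComp, Xor', Xor, h']
  ext x y
  show Xor' ((localComp G u).Adj x y)
      (x ≠ y ∧ (localComp G u).Adj v x ∧ (localComp G u).Adj v y) ↔
    Xor' ((localComp G v).Adj x y)
      (x ≠ y ∧ (localComp G v).Adj u x ∧ (localComp G v).Adj u y)
  rw [e x, e y, e2 x, e2 y]
  show Xor' (Xor' (G.Adj x y) (x ≠ y ∧ G.Adj u x ∧ G.Adj u y))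
      (x ≠ y ∧ G.Adj v x ∧ G.Adj v y) ↔
    Xor' (Xor' (G.Adj x y) (x ≠ y ∧ G.Adj v x ∧ G.Adj v y))
      (x ≠ y ∧ G.Adj u x ∧ G.Adj u y)
  exact xor_aux _ _ _
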